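/- Let \(\sigma\) be \(1\)-Lipschitz with \(\sigma(0)=0\) applied entrywise, and for matrices \(A_1,\dots,A_L\) define the network \(F(\mathbf{X}) = A_L\sigma(A_{L-1}\cdots \sigma(A_1 \mathbf{X})\cdots)\). Let \(A'_1,\dots,A'_L\) be another tuple and denote by \(s_\ell\) upper bounds with \(\|A_\ell\|_s \le s_\ell\) and \(\|A'_\ell\|_s \le s_\ell\). If \(\|A_\ell F'_{\ell-1}(\mathbf{X}) - A'_\ell F'_{\ell-1}(\mathbf{X})\|_F \le \varepsilon_\ell\) at each layer (where \(F'_{\ell-1}\) denotes the first \(\ell-1\) layers with primed parameters), then \(\|F(\mathbf{X}) - F'(\mathbf{X})\|_F \le \sum_{\ell=1}^L \varepsilon_\ell \prod_{\ell'=\ell+1}^{L} s_{\ell'}\). -/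

import Mathlib

open scoped BigOperators

/-- The network forward pass: `fwd 0 = x` (the input) and
`fwd (ℓ+1) = A_ℓ (σ_ℓ (fwd ℓ))`; since `σ 0 = id` is assumed in the theorem below,
`fwd L = A_{L-1} σ(A_{L-2} ⋯ σ(A_0 x) ⋯)`. -/
def fwd (h : ℕ → ℕ)
    (σ : ∀ i : ℕ, EuclideanSpace ℝ (Fin (h i)) → EuclideanSpace ℝ (Fin (h i)))
    (A : ∀ ℓ : ℕ, EuclideanSpace ℝ (Fin (h ℓ)) →L[ℝ] EuclideanSpace ℝ (Fin (h (ℓ + 1))))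
    (x : EuclideanSpace ℝ (Fin (h 0))) : ∀ ℓ : ℕ, EuclideanSpace ℝ (Fin (h ℓ))
  | 0 => x
  | (ℓ + 1) => A ℓ (σ ℓ (fwd h σ A x ℓ))

/-- for two networks with 1-Lipschitz activations (`σ 0 = id`: no activation on the
input, `σ i 0 = 0`), spectral norm bounds `‖A_ℓ‖, ‖A'_ℓ‖ ≤ s_ℓ`, and layerwise discrepancies
`‖(A_ℓ - A'_ℓ)(σ_ℓ F'_ℓ(X))‖ ≤ ε_ℓ` evaluated at the primed partial outputs, the full outputs
differ by at most `∑_ℓ ε_ℓ ∏_{ℓ' > ℓ} s_{ℓ'}`. -/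
theorem network_perturbation_bound
    (L : ℕ) (h : ℕ → ℕ)
    (σ : ∀ i : ℕ, EuclideanSpace ℝ (Fin (h i)) → EuclideanSpace ℝ (Fin (h i)))
    (hσ0 : σ 0 = id)
    (hσlip : ∀ i, LipschitzWith 1 (σ i))
    (hσzero : ∀ i, σ i 0 = 0)
    (A A' : ∀ ℓ : ℕ, EuclideanSpace ℝ (Fin (h ℓ)) →L[ℝ] EuclideanSpace ℝ (Fin (h (ℓ + 1))))
    (s : ℕ → ℝ) (hs : ∀ ℓ, 0 ≤ s ℓ)
    (hA : ∀ ℓ, ‖A ℓ‖ ≤ s ℓ) (hA' : ∀ ℓ, ‖A' ℓ‖ ≤ s ℓ)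
    (x : EuclideanSpace ℝ (Fin (h 0)))
    (ε : ℕ → ℝ)
    (hε : ∀ ℓ < L, ‖A ℓ (σ ℓ (fwd h σ A' x ℓ)) - A' ℓ (σ ℓ (fwd h σ A' x ℓ))‖ ≤ ε ℓ) :
    ‖fwd h σ A x L - fwd h σ A' x L‖
      ≤ ∑ ℓ ∈ Finset.range L, ε ℓ * ∏ ℓ' ∈ Finset.Ico (ℓ + 1) L, s ℓ' := by

  induction L with
  | zero => simp [fwd]
  | succ L ih =>
    have hεL : ∀ ℓ < L, ‖A ℓ (σ ℓ (fwd h σ A' x ℓ)) - A' ℓ (σ ℓ (fwd h σ A' x ℓ))‖ ≤ ε ℓ :=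
      fun ℓ hℓ => hε ℓ (Nat.lt_succ_of_lt hℓ)
    have key : ‖fwd h σ A x (L+1) - fwd h σ A' x (L+1)‖
        ≤ s L * ‖fwd h σ A x L - fwd h σ A' x L‖ + ε L := by
      have step1 : fwd h σ A x (L+1) - fwd h σ A' x (L+1)
          = (A L (σ L (fwd h σ A x L)) - A L (σ L (fwd h σ A' x L)))
            + (A L (σ L (fwd h σ A' x L)) - A' L (σ L (fwd h σ A' x L))) := by
        simp [fwd]
      rw [step1]
      refine le_trans (norm_add_le _ _) (add_le_add ?_ (hε L (Nat.lt_succ_self L)))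
      calc ‖A L (σ L (fwd h σ A x L)) - A L (σ L (fwd h σ A' x L))‖
          = ‖A L (σ L (fwd h σ A x L) - σ L (fwd h σ A' x L))‖ := by rw [map_sub]
        _ ≤ ‖A L‖ * ‖σ L (fwd h σ A x L) - σ L (fwd h σ A' x L)‖ := (A L).le_opNorm _
        _ ≤ s L * ‖fwd h σ A x L - fwd h σ A' x L‖ := by
            have := (hσlip L).dist_le_mul (fwd h σ A x L) (fwd h σ A' x L)
            simp only [NNReal.coe_one, one_mul, dist_eq_norm] at this
            exact mul_le_mul (hA L) this (norm_nonneg _)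
              (le_trans (norm_nonneg _) (hA L))
    have ihb := ih hεL
    calc ‖fwd h σ A x (L+1) - fwd h σ A' x (L+1)‖
        ≤ s L * ‖fwd h σ A x L - fwd h σ A' x L‖ + ε L := key
      _ ≤ s L * (∑ ℓ ∈ Finset.range L, ε ℓ * ∏ ℓ' ∈ Finset.Ico (ℓ + 1) L, s ℓ') + ε L :=
          add_le_add_left (mul_le_mul_of_nonneg_left ihb (hs L)) _
      _ = ∑ ℓ ∈ Finset.range (L+1), ε ℓ * ∏ ℓ' ∈ Finset.Ico (ℓ + 1) (L+1), s ℓ' := by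
          rw [Finset.sum_range_succ, Finset.mul_sum]
          congr 1
          · refine Finset.sum_congr rfl fun ℓ hℓ => ?_
            rw [Finset.prod_Ico_succ_top (Nat.succ_le_of_lt (Finset.mem_range.mp hℓ))]
            ring
          · simp
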